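/- Let H, K, G be small categories, i : H ⥤ G and j : K ⥤ G functors, and M a category with all small colimits. Let p : (i ↓ j) ⥤ H and q : (i ↓ j) ⥤ K be the two projection functors of the comma category, with canonical natural transformation λ : p ⋙ i ⟶ q ⋙ j. Then for every functor W : H ⥤ M, the canonical comparison natural transformation Lan_q(p ⋙ W) ⟶ j ⋙ Lan_i(W), induced by λ and the universal property of the left Kan extension along q, is a natural isomorphism (Res_j ∘ Lan_i ≅ Lan_q ∘ Res_p). -/

import Mathlib

open CategoryTheory CategoryTheory.Limits

namespace Stmt3Aux

variable {H K G : Type} [SmallCategory H] [SmallCategory K] [SmallCategory G]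
  (i : H ⥤ G) (j : K ⥤ G) (k : K)

/-- The underlying comma object. -/
@[simps]
def Robj (x : CostructuredArrow i (j.obj k)) : Comma i j where
  left := x.left
  right := k
  hom := x.hom

/-- The inclusion `CostructuredArrow i (j.obj k) ⥤ CostructuredArrow (Comma.snd i j) k`. -/
@[simps!]
def R : CostructuredArrow i (j.obj k) ⥤ CostructuredArrow (Comma.snd i j) k where
  obj x := CostructuredArrow.mk (S := Comma.snd i j) (Y := Robj i j k x) (𝟙 k)
  map {x y} f := CostructuredArrow.homMk
    { left := f.left
      right := 𝟙 k
      w := by exact (CostructuredArrow.w f).trans ((Category.comp_id _).symm.trans (congrArg (fun t => x.hom ≫ t) (j.map_id k).symm)) } (by exact Category.id_comp _)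
  map_comp f g := by
    apply CostructuredArrow.hom_ext
    apply CommaMorphism.ext
    · rfl
    · exact (Category.comp_id _).symm

/-- The comparison functor `Φ`. -/
@[simps!]
def Phi : CostructuredArrow (Comma.snd i j) k ⥤ CostructuredArrow i (j.obj k) where
  obj g := CostructuredArrow.mk (g.left.hom ≫ j.map g.hom)
  map {g₁ g₂} φ := CostructuredArrow.homMk φ.left.left (by
    have h1 := φ.left.w
    have h2 := CostructuredArrow.w φ
    dsimp at h1 h2 ⊢
    rw [reassoc_of% h1, ← j.map_comp]
    exact congrArg (fun t => g₁.left.hom ≫ j.map t) h2)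
  map_id g := by apply CostructuredArrow.hom_ext; rfl
  map_comp φ ψ := by apply CostructuredArrow.hom_ext; rfl

/-- `Phi ⊣ R`. -/
def adj : Phi i j k ⊣ R i j k :=
  Adjunction.mkOfHomEquiv
    { homEquiv := fun X y =>
        { toFun := fun u => CostructuredArrow.homMk
            { left := u.left
              right := X.hom
              w := by exact CostructuredArrow.w u } (by exact Category.comp_id X.hom)
          invFun := fun v => CostructuredArrow.homMk v.left.left (by
            have h1 := v.left.w
            have h2 := CostructuredArrow.w v
            change i.map v.left.left ≫ y.hom = X.left.hom ≫ j.map X.hom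
            change i.map v.left.left ≫ y.hom = X.left.hom ≫ j.map v.left.right at h1
            change v.left.right ≫ 𝟙 k = X.hom at h2
            exact h1.trans (congrArg (fun t => X.left.hom ≫ j.map t) ((Category.comp_id _).symm.trans h2)))
          left_inv := fun u => by apply CostructuredArrow.hom_ext; rfl
          right_inv := fun v => by
            have h2 := CostructuredArrow.w v
            apply CostructuredArrow.hom_ext
            apply CommaMorphism.ext
            · rfl
            · dsimp
              exact h2.symm.trans (Category.comp_id _) }
      homEquiv_naturality_left_symm := by
        intros; apply CostructuredArrow.hom_ext; rfl
      homEquiv_naturality_right := by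
        intros
        apply CostructuredArrow.hom_ext
        apply CommaMorphism.ext
        · rfl
        · dsimp [R]; exact (Category.comp_id _).symm }

instance : (R i j k).Final := Functor.final_of_adjunction (adj i j k)

end Stmt3Aux

/-- For functors `i : H ⥤ G`, `j : K ⥤ G` between small categories and a cocomplete
category `M`, the canonical comparison natural transformation
`Lan_q (p ⋙ W) ⟶ j ⋙ Lan_i W` (where `p`, `q` are the projections of the comma
category `i ↓ j` and the comparison is induced by the canonical natural transformation
`λ : p ⋙ i ⟶ q ⋙ j` and the universal property of the left Kan extension along `q`)
is an isomorphism: `Res_j ∘ Lan_i ≅ Lan_q ∘ Res_p`. -/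
theorem stmt3 {H K G : Type} [SmallCategory H] [SmallCategory K] [SmallCategory G]
    {M : Type*} [Category M] [HasColimitsOfSize.{0, 0} M]
    (i : H ⥤ G) (j : K ⥤ G) (W : H ⥤ M) :
    IsIso (Functor.descOfIsLeftKanExtension
      ((Comma.snd i j).leftKanExtension (Comma.fst i j ⋙ W))
      ((Comma.snd i j).leftKanExtensionUnit (Comma.fst i j ⋙ W))
      (j ⋙ i.leftKanExtension W)
      (Functor.whiskerLeft (Comma.fst i j) (i.leftKanExtensionUnit W) ≫
        Functor.whiskerRight (Comma.natTrans i j) (i.leftKanExtension W))) := by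
  rw [← Functor.isLeftKanExtension_iff_isIso _
    ((Comma.snd i j).leftKanExtensionUnit (Comma.fst i j ⋙ W)) _
    (Functor.descOfIsLeftKanExtension_fac _ _ _ _)]
  let E : Functor.LeftExtension (Comma.snd i j) (Comma.fst i j ⋙ W) :=
    Functor.LeftExtension.mk (j ⋙ i.leftKanExtension W)
      (Functor.whiskerLeft (Comma.fst i j) (i.leftKanExtensionUnit W) ≫
        Functor.whiskerRight (Comma.natTrans i j) (i.leftKanExtension W))
  have hE : E.IsPointwiseLeftKanExtension := by
    intro k
    have hW : IsColimit ((Functor.LeftExtension.mk _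
        (i.leftKanExtensionUnit W)).coconeAt (j.obj k)) :=
      Functor.isPointwiseLeftKanExtensionOfIsLeftKanExtension
        (i.leftKanExtension W) (i.leftKanExtensionUnit W) (j.obj k)
    refine (Functor.Final.isColimitWhiskerEquiv (Stmt3Aux.R i j k) _) ?_
    let eDiag : CostructuredArrow.proj i (j.obj k) ⋙ W ≅
        Stmt3Aux.R i j k ⋙ (CostructuredArrow.proj (Comma.snd i j) k ⋙
          (Comma.fst i j ⋙ W)) :=
      NatIso.ofComponents (fun x => Iso.refl _) (by intros; simp [Stmt3Aux.R]; exact (Category.comp_id _).trans (Category.id_comp _).symm)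
    refine IsColimit.equivOfNatIsoOfIso eDiag _ _ ?_ hW
    refine Cocones.ext (Iso.refl _) ?_
    intro x
    simp [E, Stmt3Aux.R, eDiag]
    exact (Category.comp_id _).trans ((Category.id_comp _).trans ((Category.comp_id _).symm.trans (whisker_eq _ ((j ⋙ i.leftKanExtension W).map_id k).symm)))
  exact hE.isLeftKanExtension
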